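/- In the elliptical model Xᵢ = σ·εᵢ with E[σ⁴] < ∞, the correlation of squared returns equals ζ⁽²⁾ = (f₂(1 + 2r²) − 1)/(3f₂ − 1), where f₂ = E[σ⁴]/E[σ²]² and r is the correlation of the Gaussian residuals. -/

import Mathlib

open MeasureTheory ProbabilityTheory Real

open MeasureTheory ProbabilityTheory Real Set
open scoped NNReal ENNReal

lemma gauss_even_integral (b : ℝ) (hb : 0 < b) (n : ℕ) :
    ∫ x : ℝ, x ^ (2 * n) * rexp (-b * x ^ 2) =
      b ^ (-(2 * (n : ℝ) + 1) / 2) * Real.Gamma ((2 * (n : ℝ) + 1) / 2) := by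
  have h1 : (fun x : ℝ => x ^ (2 * n) * rexp (-b * x ^ 2)) =
      fun x : ℝ => (fun y : ℝ => y ^ (2 * n) * rexp (-b * y ^ 2)) |x| := by
    funext x
    simp [pow_mul, sq_abs]
  rw [h1, integral_comp_abs (f := fun y : ℝ => y ^ (2 * n) * rexp (-b * y ^ 2))]
  have h2 : ∫ x in Ioi (0:ℝ), x ^ (2 * n) * rexp (-b * x ^ 2) =
      ∫ x in Ioi (0:ℝ), x ^ ((2 * n : ℕ) : ℝ) * rexp (-b * x ^ (2:ℝ)) := by
    refine setIntegral_congr_fun measurableSet_Ioi (fun x hx => ?_)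
    rw [Real.rpow_natCast, Real.rpow_two]
  rw [h2, integral_rpow_mul_exp_neg_mul_rpow two_pos
    (lt_of_lt_of_le neg_one_lt_zero (by positivity)) hb]
  push_cast
  ring

lemma integral_gaussianReal_eq (v : ℝ≥0) (hv : v ≠ 0) (g : ℝ → ℝ) :
    ∫ x, g x ∂(gaussianReal 0 v) = ∫ x, gaussianPDFReal 0 v x * g x := by
  rw [gaussianReal_of_var_ne_zero 0 hv, gaussianPDF_def]
  have : (fun x => ENNReal.ofReal (gaussianPDFReal 0 v x)) =
      fun x => ((gaussianPDFReal 0 v x).toNNReal : ℝ≥0∞) := rfl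
  rw [this, integral_withDensity_eq_integral_smul
    (measurable_gaussianPDFReal 0 v).real_toNNReal g]
  congr 1
  funext x
  rw [NNReal.smul_def, Real.coe_toNNReal _ (gaussianPDFReal_nonneg 0 v x), smul_eq_mul]

lemma gaussianPDFReal_zero_mean (v : ℝ≥0) (x : ℝ) :
    gaussianPDFReal 0 v x = (√(2 * π * v))⁻¹ * rexp (-(2 * (v:ℝ))⁻¹ * x ^ 2) := by
  rw [gaussianPDFReal]
  congr 1
  rw [sub_zero]
  by_cases hv : (v:ℝ) = 0
  · simp [hv]
  · field_simp

lemma integrable_pow_gaussianReal (v : ℝ≥0) (n : ℕ) :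
    Integrable (fun x => x ^ n) (gaussianReal 0 v) := by
  by_cases hv : v = 0
  · rw [hv, gaussianReal_zero_var]
    exact (integrable_const ((0:ℝ) ^ n)).congr
      (MeasureTheory.ae_eq_dirac' ((measurable_id (α := ℝ)).pow_const n)).symm
  · rw [gaussianReal_of_var_ne_zero 0 hv, gaussianPDF_def]
    have : (fun x => ENNReal.ofReal (gaussianPDFReal 0 v x)) =
        fun x => ((gaussianPDFReal 0 v x).toNNReal : ℝ≥0∞) := rfl
    rw [this, integrable_withDensity_iff_integrable_smul
      (measurable_gaussianPDFReal 0 v).real_toNNReal]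
    have hvpos : (0:ℝ) < (v:ℝ) := lt_of_le_of_ne v.coe_nonneg (by exact_mod_cast (Ne.symm hv))
    have hb : (0:ℝ) < (2 * (v:ℝ))⁻¹ := by positivity
    have key : Integrable (fun x : ℝ => x ^ ((n:ℝ)) * rexp (-(2 * (v:ℝ))⁻¹ * x ^ 2)) :=
      integrable_rpow_mul_exp_neg_mul_sq hb (lt_of_lt_of_le neg_one_lt_zero (by positivity))
    have key' : Integrable (fun x : ℝ => x ^ n * rexp (-(2 * (v:ℝ))⁻¹ * x ^ 2)) := by
      simpa [Real.rpow_natCast] using key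
    refine (key'.const_mul (√(2 * π * v))⁻¹).congr ?_
    filter_upwards with x
    rw [NNReal.smul_def, Real.coe_toNNReal _ (gaussianPDFReal_nonneg 0 v x), smul_eq_mul,
      gaussianPDFReal_zero_mean]
    ring

lemma Gamma_three_halves : Real.Gamma (3/2) = √π / 2 := by
  rw [show (3:ℝ)/2 = 1/2 + 1 by norm_num, Real.Gamma_add_one (by norm_num),
    Real.Gamma_one_half_eq]
  ring

lemma Gamma_five_halves : Real.Gamma (5/2) = 3 * √π / 4 := by
  rw [show (5:ℝ)/2 = 3/2 + 1 by norm_num, Real.Gamma_add_one (by norm_num), Gamma_three_halves]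
  ring

lemma inv_rpow_neg {t : ℝ} (ht : 0 < t) (a : ℝ) : (t⁻¹ : ℝ) ^ (-a) = t ^ a := by
  rw [Real.inv_rpow ht.le, Real.rpow_neg ht.le, inv_inv]

lemma rpow_three_halves {t : ℝ} (ht : 0 < t) : t ^ ((3:ℝ)/2) = t * √t := by
  rw [show (3:ℝ)/2 = 1 + 1/2 by norm_num, Real.rpow_add ht, Real.rpow_one,
    ← Real.sqrt_eq_rpow]

lemma rpow_five_halves {t : ℝ} (ht : 0 < t) : t ^ ((5:ℝ)/2) = t ^ 2 * √t := by
  rw [show (5:ℝ)/2 = 2 + 1/2 by norm_num, Real.rpow_add ht, Real.rpow_two,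
    ← Real.sqrt_eq_rpow, ← Real.rpow_two]

lemma integral_sq_gaussianReal (v : ℝ≥0) : ∫ x, x ^ 2 ∂(gaussianReal 0 v) = v := by
  by_cases hv : v = 0
  · simp [hv]
  · have hvpos : (0:ℝ) < (v:ℝ) := lt_of_le_of_ne v.coe_nonneg (by exact_mod_cast (Ne.symm hv))
    have ht : (0:ℝ) < 2 * (v:ℝ) := by positivity
    rw [integral_gaussianReal_eq v hv]
    have heq : ∀ x : ℝ, gaussianPDFReal 0 v x * x ^ 2 =
        (√(2 * π * v))⁻¹ * (x ^ (2*1) * rexp (-(2 * (v:ℝ))⁻¹ * x ^ 2)) := by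
      intro x; rw [gaussianPDFReal_zero_mean]; ring
    simp_rw [heq]
    rw [integral_const_mul, gauss_even_integral _ (by positivity) 1]
    have h1 : -(2 * ((1:ℕ):ℝ) + 1) / 2 = -((3:ℝ)/2) := by norm_num
    have h2 : (2 * ((1:ℕ):ℝ) + 1) / 2 = (3:ℝ)/2 := by norm_num
    rw [h1, h2, inv_rpow_neg ht, rpow_three_halves ht, Gamma_three_halves]
    have hsq : √(2 * π * (v:ℝ)) = √π * √(2 * (v:ℝ)) := by
      rw [show 2 * π * (v:ℝ) = π * (2 * (v:ℝ)) by ring, Real.sqrt_mul pi_nonneg]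
    rw [hsq]
    have h3 : (0:ℝ) < √(2 * (v:ℝ)) := Real.sqrt_pos.mpr ht
    have h4 : (0:ℝ) < √π := Real.sqrt_pos.mpr pi_pos
    field_simp

lemma integral_fourth_gaussianReal (v : ℝ≥0) :
    ∫ x, x ^ 4 ∂(gaussianReal 0 v) = 3 * (v:ℝ) ^ 2 := by
  by_cases hv : v = 0
  · simp [hv]
  · have hvpos : (0:ℝ) < (v:ℝ) := lt_of_le_of_ne v.coe_nonneg (by exact_mod_cast (Ne.symm hv))
    have ht : (0:ℝ) < 2 * (v:ℝ) := by positivity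
    rw [integral_gaussianReal_eq v hv]
    have heq : ∀ x : ℝ, gaussianPDFReal 0 v x * x ^ 4 =
        (√(2 * π * v))⁻¹ * (x ^ (2*2) * rexp (-(2 * (v:ℝ))⁻¹ * x ^ 2)) := by
      intro x; rw [gaussianPDFReal_zero_mean]; ring
    simp_rw [heq]
    rw [integral_const_mul, gauss_even_integral _ (by positivity) 2]
    have h1 : -(2 * ((2:ℕ):ℝ) + 1) / 2 = -((5:ℝ)/2) := by norm_num
    have h2 : (2 * ((2:ℕ):ℝ) + 1) / 2 = (5:ℝ)/2 := by norm_num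
    rw [h1, h2, inv_rpow_neg ht, rpow_five_halves ht, Gamma_five_halves]
    have hsq : √(2 * π * (v:ℝ)) = √π * √(2 * (v:ℝ)) := by
      rw [show 2 * π * (v:ℝ) = π * (2 * (v:ℝ)) by ring, Real.sqrt_mul pi_nonneg]
    rw [hsq]
    have h3 : (0:ℝ) < √(2 * (v:ℝ)) := Real.sqrt_pos.mpr ht
    have h4 : (0:ℝ) < √π := Real.sqrt_pos.mpr pi_pos
    field_simp
    ring

lemma integrable_pow_of_map_gaussian {Ω : Type*} [MeasurableSpace Ω] {P : Measure Ω}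
    {X : Ω → ℝ} (hX : Measurable X) {v : ℝ≥0}
    (hmap : Measure.map X P = gaussianReal 0 v) (n : ℕ) :
    Integrable (fun ω => X ω ^ n) P := by
  have h := integrable_pow_gaussianReal v n
  rw [← hmap, integrable_map_measure
    ((continuous_pow n).aestronglyMeasurable) hX.aemeasurable] at h
  exact h

lemma integral_pow_of_map_gaussian {Ω : Type*} [MeasurableSpace Ω] {P : Measure Ω}
    {X : Ω → ℝ} (hX : Measurable X) {v : ℝ≥0}
    (hmap : Measure.map X P = gaussianReal 0 v) (n : ℕ) :
    ∫ ω, X ω ^ n ∂P = ∫ x, x ^ n ∂(gaussianReal 0 v) := by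
  rw [← hmap, integral_map hX.aemeasurable ((continuous_pow n).aestronglyMeasurable)]


def IsBivGaussian {Ω : Type*} [MeasurableSpace Ω] (P : Measure Ω)
    (X Y : Ω → ℝ) (ρ : ℝ) : Prop :=
  ∀ a b : ℝ, Measure.map (fun ω => a * X ω + b * Y ω) P =
    gaussianReal 0 (Real.toNNReal (a ^ 2 + 2 * a * b * ρ + b ^ 2))

/-- In the elliptical model `Xᵢ = σ·εᵢ` with `E[σ⁴] < ∞`, the correlation of squared
returns equals `(f₂(1 + 2r²) - 1)/(3f₂ - 1)` with `f₂ = E[σ⁴]/E[σ²]²`. -/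
theorem stmt_6 {Ω : Type*} [MeasurableSpace Ω] (P : Measure Ω) [IsProbabilityMeasure P]
    (σ ε₁ ε₂ : Ω → ℝ) (hσ : Measurable σ) (hε₁ : Measurable ε₁) (hε₂ : Measurable ε₂)
    (hσpos : ∀ ω, 0 < σ ω) (hσ4 : Integrable (fun ω => (σ ω) ^ 4) P)
    (r : ℝ) (hr₁ : -1 ≤ r) (hr₂ : r ≤ 1)
    (hgauss : IsBivGaussian P ε₁ ε₂ r)
    (hindep : IndepFun σ (fun ω => (ε₁ ω, ε₂ ω)) P)
    (f₂ : ℝ) (hf₂ : f₂ = (∫ ω, (σ ω) ^ 4 ∂P) / (∫ ω, (σ ω) ^ 2 ∂P) ^ 2)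
    (h3f₂ : 3 * f₂ > 1) :
    ((∫ ω, (σ ω * ε₁ ω) ^ 2 * (σ ω * ε₂ ω) ^ 2 ∂P) -
        (∫ ω, (σ ω * ε₁ ω) ^ 2 ∂P) * (∫ ω, (σ ω * ε₂ ω) ^ 2 ∂P)) /
      Real.sqrt (((∫ ω, (σ ω * ε₁ ω) ^ 4 ∂P) - (∫ ω, (σ ω * ε₁ ω) ^ 2 ∂P) ^ 2) *
        ((∫ ω, (σ ω * ε₂ ω) ^ 4 ∂P) - (∫ ω, (σ ω * ε₂ ω) ^ 2 ∂P) ^ 2)) =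
    (f₂ * (1 + 2 * r ^ 2) - 1) / (3 * f₂ - 1) := by
  -- marginal laws
  have h1 : Measure.map ε₁ P = gaussianReal 0 1 := by
    have h := hgauss 1 0
    simp only [one_mul, zero_mul, add_zero, mul_zero] at h
    norm_num at h
    exact h
  have h2 : Measure.map ε₂ P = gaussianReal 0 1 := by
    have h := hgauss 0 1
    simp only [one_mul, zero_mul, add_zero, zero_add, mul_zero, mul_one] at h
    norm_num at h
    exact h
  have hsum : Measure.map (fun ω => ε₁ ω + ε₂ ω) P =
      gaussianReal 0 (Real.toNNReal (2 + 2 * r)) := by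
    have h := hgauss 1 1
    simp only [one_mul] at h
    rw [show (1:ℝ) ^ 2 + 2 * 1 * 1 * r + 1 ^ 2 = 2 + 2 * r by ring] at h
    exact h
  have hdiff : Measure.map (fun ω => ε₁ ω - ε₂ ω) P =
      gaussianReal 0 (Real.toNNReal (2 - 2 * r)) := by
    have h := hgauss 1 (-1)
    simp only [one_mul, neg_one_mul] at h
    rw [show (1:ℝ) ^ 2 + 2 * 1 * (-1) * r + (-1) ^ 2 = 2 - 2 * r by ring,
      show (fun ω => ε₁ ω + -ε₂ ω) = (fun ω => ε₁ ω - ε₂ ω) from by funext ω; ring] at h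
    exact h
  -- Gaussian moments of ε's
  have hE1sq : ∫ ω, ε₁ ω ^ 2 ∂P = 1 := by
    rw [integral_pow_of_map_gaussian hε₁ h1, integral_sq_gaussianReal]; norm_num
  have hE2sq : ∫ ω, ε₂ ω ^ 2 ∂P = 1 := by
    rw [integral_pow_of_map_gaussian hε₂ h2, integral_sq_gaussianReal]; norm_num
  have hE14 : ∫ ω, ε₁ ω ^ 4 ∂P = 3 := by
    rw [integral_pow_of_map_gaussian hε₁ h1, integral_fourth_gaussianReal]; norm_num
  have hE24 : ∫ ω, ε₂ ω ^ 4 ∂P = 3 := by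
    rw [integral_pow_of_map_gaussian hε₂ h2, integral_fourth_gaussianReal]; norm_num
  have hEs4 : ∫ ω, (ε₁ ω + ε₂ ω) ^ 4 ∂P = 3 * (2 + 2 * r) ^ 2 := by
    rw [integral_pow_of_map_gaussian (X := fun ω => ε₁ ω + ε₂ ω) (hε₁.add hε₂) hsum, integral_fourth_gaussianReal,
      Real.coe_toNNReal _ (by linarith)]
  have hEd4 : ∫ ω, (ε₁ ω - ε₂ ω) ^ 4 ∂P = 3 * (2 - 2 * r) ^ 2 := by
    rw [integral_pow_of_map_gaussian (X := fun ω => ε₁ ω - ε₂ ω) (hε₁.sub hε₂) hdiff, integral_fourth_gaussianReal,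
      Real.coe_toNNReal _ (by linarith)]
  -- integrability of ε moments
  have I14 : Integrable (fun ω => ε₁ ω ^ 4) P := integrable_pow_of_map_gaussian hε₁ h1 4
  have I24 : Integrable (fun ω => ε₂ ω ^ 4) P := integrable_pow_of_map_gaussian hε₂ h2 4
  have Is4 : Integrable (fun ω => (ε₁ ω + ε₂ ω) ^ 4) P :=
    integrable_pow_of_map_gaussian (hε₁.add hε₂) hsum 4
  have Id4 : Integrable (fun ω => (ε₁ ω - ε₂ ω) ^ 4) P :=
    integrable_pow_of_map_gaussian (hε₁.sub hε₂) hdiff 4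
  have Imix : Integrable (fun ω => ε₁ ω ^ 2 * ε₂ ω ^ 2) P := by
    refine Integrable.mono' (I14.add I24)
      (((hε₁.pow_const 2).mul (hε₂.pow_const 2)).aestronglyMeasurable) ?_
    filter_upwards with ω
    simp only [Pi.add_apply]
    rw [Real.norm_eq_abs, abs_of_nonneg (by positivity)]
    nlinarith [sq_nonneg (ε₁ ω ^ 2 - ε₂ ω ^ 2)]
  -- mixed moment
  have hEmix : ∫ ω, ε₁ ω ^ 2 * ε₂ ω ^ 2 ∂P = 1 + 2 * r ^ 2 := by
    have hpt : (fun ω => (ε₁ ω + ε₂ ω) ^ 4 + (ε₁ ω - ε₂ ω) ^ 4) =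
        fun ω => 2 * ε₁ ω ^ 4 + 12 * (ε₁ ω ^ 2 * ε₂ ω ^ 2) + 2 * ε₂ ω ^ 4 := by
      funext ω; ring
    have hL : ∫ ω, ((ε₁ ω + ε₂ ω) ^ 4 + (ε₁ ω - ε₂ ω) ^ 4) ∂P =
        3 * (2 + 2 * r) ^ 2 + 3 * (2 - 2 * r) ^ 2 := by
      rw [integral_add Is4 Id4, hEs4, hEd4]
    rw [show (fun ω => (ε₁ ω + ε₂ ω) ^ 4 + (ε₁ ω - ε₂ ω) ^ 4) =
        fun ω => 2 * ε₁ ω ^ 4 + 12 * (ε₁ ω ^ 2 * ε₂ ω ^ 2) + 2 * ε₂ ω ^ 4 from hpt] at hL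
    have Ia : Integrable (fun ω => 2 * ε₁ ω ^ 4 + 12 * (ε₁ ω ^ 2 * ε₂ ω ^ 2)) P :=
      (I14.const_mul 2).add (Imix.const_mul 12)
    rw [integral_add Ia (I24.const_mul 2), integral_add (I14.const_mul 2) (Imix.const_mul 12),
      integral_const_mul, integral_const_mul, integral_const_mul, hE14, hE24] at hL
    have hexp : (3 * (2 + 2 * r) ^ 2 + 3 * (2 - 2 * r) ^ 2 : ℝ) = 24 + 24 * r ^ 2 := by ring
    rw [hexp] at hL
    linarith
  -- independence: E[σ^k g(ε₁,ε₂)] = E[σ^k] E[g(ε₁,ε₂)]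
  have key : ∀ (g : ℝ × ℝ → ℝ), Measurable g → ∀ k : ℕ,
      ∫ ω, σ ω ^ k * g (ε₁ ω, ε₂ ω) ∂P =
        (∫ ω, σ ω ^ k ∂P) * ∫ ω, g (ε₁ ω, ε₂ ω) ∂P := by
    intro g hg k
    have hcomp : IndepFun (fun ω => σ ω ^ k) (fun ω => g (ε₁ ω, ε₂ ω)) P :=
      hindep.comp (measurable_id.pow_const k) hg
    exact hcomp.integral_fun_mul_eq_mul_integral ((hσ.pow_const k).aestronglyMeasurable)
      ((hg.comp (hε₁.prodMk hε₂)).aestronglyMeasurable)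
  set A := ∫ ω, σ ω ^ 4 ∂P with hA_def
  set B := ∫ ω, σ ω ^ 2 ∂P with hB_def
  have hX1sq : ∫ ω, (σ ω * ε₁ ω) ^ 2 ∂P = B := by
    have h := key (fun p => p.1 ^ 2) (by fun_prop) 2
    simp only [mul_pow]
    rw [show (fun ω => σ ω ^ 2 * ε₁ ω ^ 2) = fun ω => σ ω ^ 2 * (fun p : ℝ × ℝ => p.1 ^ 2) (ε₁ ω, ε₂ ω) from rfl] at *
    rw [h]
    simp only [hE1sq, mul_one]
    rfl
  have hX2sq : ∫ ω, (σ ω * ε₂ ω) ^ 2 ∂P = B := by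
    have h := key (fun p => p.2 ^ 2) (by fun_prop) 2
    simp only [mul_pow]
    rw [h]
    simp only [hE2sq, mul_one]
    rfl
  have hX14 : ∫ ω, (σ ω * ε₁ ω) ^ 4 ∂P = 3 * A := by
    have h := key (fun p => p.1 ^ 4) (by fun_prop) 4
    simp only [mul_pow]
    rw [h, hE14]
    ring
  have hX24 : ∫ ω, (σ ω * ε₂ ω) ^ 4 ∂P = 3 * A := by
    have h := key (fun p => p.2 ^ 4) (by fun_prop) 4
    simp only [mul_pow]
    rw [h, hE24]
    ring
  have hXmix : ∫ ω, (σ ω * ε₁ ω) ^ 2 * (σ ω * ε₂ ω) ^ 2 ∂P = A * (1 + 2 * r ^ 2) := by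
    have h := key (fun p => p.1 ^ 2 * p.2 ^ 2) (by fun_prop) 4
    have hpt : (fun ω => (σ ω * ε₁ ω) ^ 2 * (σ ω * ε₂ ω) ^ 2) =
        fun ω => σ ω ^ 4 * (ε₁ ω ^ 2 * ε₂ ω ^ 2) := by
      funext ω; ring
    rw [show ∫ ω, (σ ω * ε₁ ω) ^ 2 * (σ ω * ε₂ ω) ^ 2 ∂P =
        ∫ ω, σ ω ^ 4 * (ε₁ ω ^ 2 * ε₂ ω ^ 2) ∂P from by rw [hpt]]
    rw [h, hEmix]
  -- positivity of B
  have Iσ2 : Integrable (fun ω => σ ω ^ 2) P := by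
    refine Integrable.mono' ((integrable_const (1:ℝ)).add hσ4)
      ((hσ.pow_const 2).aestronglyMeasurable) ?_
    filter_upwards with ω
    simp only [Pi.add_apply]
    rw [Real.norm_eq_abs, abs_of_nonneg (sq_nonneg _)]
    nlinarith [sq_nonneg (σ ω ^ 2 - 1)]
  have hBpos : 0 < B := by
    rw [hB_def]
    rw [integral_pos_iff_support_of_nonneg (fun ω => sq_nonneg (σ ω)) Iσ2]
    have hsupp : Function.support (fun ω => σ ω ^ 2) = Set.univ := by
      ext ω
      simp [Function.mem_support, pow_eq_zero_iff, (hσpos ω).ne']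
    rw [hsupp]
    simp
  have hA_eq : A = f₂ * B ^ 2 := by
    rw [hf₂]; field_simp
  have hdenpos : (0:ℝ) < 3 * A - B ^ 2 := by
    rw [hA_eq]
    have : 3 * (f₂ * B ^ 2) - B ^ 2 = (3 * f₂ - 1) * B ^ 2 := by ring
    rw [this]
    apply mul_pos (by linarith) (by positivity)
  rw [hXmix, hX1sq, hX2sq, hX14, hX24]
  rw [show (3 * A - B ^ 2) * (3 * A - B ^ 2) = (3 * A - B ^ 2) * (3 * A - B ^ 2) from rfl]
  rw [Real.sqrt_mul_self hdenpos.le]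
  rw [div_eq_div_iff hdenpos.ne' (by intro hc; nlinarith : (3 * f₂ - 1 : ℝ) ≠ 0)]
  rw [hA_eq]
  ring
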